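/- Let n ≥ 2, let A ∈ ℂ^{n×n} be invertible, let C ∈ ℂ^{n×n} have its only nonzero entry C_{1,n} = 1, and set r := (A^{−1})_{n,1}. For ω ∈ ℝ and θ ∈ ℝ, define the smoother symbol S := (1−ω) I_n + ω e^{−iθ} A^{−1} C. Then the spectrum of S equals {1−ω, 1−ω + ω e^{−iθ} r}, and consequently the spectral radius of S equals max{ |1−ω|, |1−ω + ω e^{−iθ} r| }. -/

import Mathlib

/-- Spectrum and spectral radius of the smoother symbol
`S = (1-ω) I + ω e^{-iθ} A⁻¹ C` with `C = e₁ eₙᵀ` and `r = (A⁻¹)_{n,1}`: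
`σ(S) = {1-ω, 1-ω+ωe^{-iθ}r}` and `ρ(S) = max{|1-ω|, |1-ω+ωe^{-iθ}r|}`. -/
theorem stmt_9
    (n : ℕ) (hn : 2 ≤ n)
    (A : Matrix (Fin n) (Fin n) ℂ) (hA : IsUnit A)
    (C : Matrix (Fin n) (Fin n) ℂ)
    (hC : C = Matrix.single (⟨0, by omega⟩ : Fin n) (⟨n - 1, by omega⟩ : Fin n) 1)
    (r : ℂ) (hr : r = A⁻¹ ⟨n - 1, by omega⟩ ⟨0, by omega⟩)
    (ω θ : ℝ)
    (S : Matrix (Fin n) (Fin n) ℂ)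
    (hS : S = (1 - (ω : ℂ)) • (1 : Matrix (Fin n) (Fin n) ℂ)
      + ((ω : ℂ) * Complex.exp (-Complex.I * (θ : ℂ))) • (A⁻¹ * C)) :
    spectrum ℂ S = {1 - (ω : ℂ), 1 - (ω : ℂ) + (ω : ℂ) * Complex.exp (-Complex.I * (θ : ℂ)) * r}
    ∧ spectralRadius ℂ S =
        max (‖(1 - (ω : ℂ))‖₊ : ENNReal)
          (‖(1 - (ω : ℂ) + (ω : ℂ) * Complex.exp (-Complex.I * (θ : ℂ)) * r)‖₊ : ENNReal) := by
  set c : ℂ := (ω : ℂ) * Complex.exp (-Complex.I * (θ : ℂ)) with hc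
  set a : ℂ := 1 - (ω : ℂ) with ha
  set last : Fin n := ⟨n - 1, by omega⟩ with hlast
  set first : Fin n := ⟨0, by omega⟩ with hfirst
  have hAC : ∀ i j, (A⁻¹ * C) i j = A⁻¹ i first * (if j = last then 1 else 0) := by
    intro i j
    rw [hC]
    by_cases hj : j = last
    · subst hj
      simp [Matrix.mul_apply, Matrix.single, Finset.sum_ite_eq]
    · have hj' : last ≠ j := fun h => hj h.symm
      simp [Matrix.mul_apply, Matrix.single, hj, hj']
  -- entries of z • 1 - S
  have hentry : ∀ (z : ℂ) (i j : Fin n),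
      (z • (1 : Matrix (Fin n) (Fin n) ℂ) - S) i j
        = (if i = j then z - a else 0) - c * (A⁻¹ i first) * (if j = last then 1 else 0) := by
    intro z i j
    simp only [hS, Matrix.sub_apply, Matrix.add_apply, Matrix.smul_apply, Matrix.one_apply,
      smul_eq_mul, hAC]
    by_cases hij : i = j <;> simp only [hij, if_true, if_false] <;> ring
  -- determinant
  have hdet : ∀ z : ℂ, (z • (1 : Matrix (Fin n) (Fin n) ℂ) - S).det
      = (z - a) ^ (n - 1) * (z - a - c * r) := by
    intro z
    have htri : (z • (1 : Matrix (Fin n) (Fin n) ℂ) - S).BlockTriangular id := by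
      intro i j hij
      rw [hentry]
      have h1 : ¬ i = j := by
        intro h; subst h; exact lt_irrefl _ hij
      have h2 : ¬ j = last := by
        intro h
        have h3 : (j : ℕ) < (i : ℕ) := hij
        have h4 : (j : ℕ) = n - 1 := congrArg Fin.val h
        have h5 : (i : ℕ) < n := i.2
        omega
      simp [h1, h2]
    rw [Matrix.det_of_upperTriangular htri]
    have hdiag : ∀ i : Fin n, (z • (1 : Matrix (Fin n) (Fin n) ℂ) - S) i i
        = if i = last then z - a - c * r else z - a := by
      intro i
      rw [hentry]
      by_cases h : i = last <;> simp [h, hr, hfirst] <;> ring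
    simp only [hdiag]
    rw [← Finset.mul_prod_erase Finset.univ _ (Finset.mem_univ last), if_pos rfl]
    have hrest : (∏ i ∈ Finset.univ.erase last,
        (if i = last then z - a - c * r else z - a)) = (z - a) ^ (n - 1) := by
      rw [Finset.prod_congr rfl (fun i hi => if_neg (Finset.ne_of_mem_erase hi)),
        Finset.prod_const, Finset.card_erase_of_mem (Finset.mem_univ _), Finset.card_univ,
        Fintype.card_fin]
    rw [hrest]; ring
  -- spectrum membership characterization
  have hspec : spectrum ℂ S = {a, a + c * r} := by
    ext z
    rw [spectrum.mem_iff, Algebra.algebraMap_eq_smul_one]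
    rw [Matrix.isUnit_iff_isUnit_det, isUnit_iff_ne_zero, not_ne_iff, hdet]
    simp only [Set.mem_insert_iff, Set.mem_singleton_iff]
    constructor
    · intro h
      rcases mul_eq_zero.mp h with h | h
      · left
        have := pow_eq_zero_iff (n := n - 1) (by omega) |>.mp h
        linear_combination this
      · right; linear_combination h
    · rintro (h | h)
      · have : z - a = 0 := by rw [h]; ring
        rw [this, zero_pow (by omega : n - 1 ≠ 0), zero_mul]
      · have : z - a - c * r = 0 := by rw [h]; ring
        rw [this, mul_zero]
  refine ⟨hspec, ?_⟩
  rw [spectralRadius, hspec, iSup_pair]
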